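/- Let n be sufficiently large, let k be an integer with log n ≤ k ≤ √n, and let 0 ≤ d ≤ k. Then the number of prefix normal binary words w of length n with |w[1,k]|₁ = d is at most 2ⁿ · (1 − P(Bin(k,1/2) > d))^(⌊√n⌋ − 1), where Bin(k,1/2) denotes a binomial random variable with k trials and success probability 1/2. -/

import Mathlib

/-- Number of ones of the infinite binary word `w` in the 0-indexed
half-open interval of positions `[a, b)`. Thus `cnt w j (j+k)` is the number
of 1s in the subword `w[j+1, j+k]` (1-indexed), and `cnt w 0 k` is the number
of 1s in the prefix of length `k`. -/
def cnt (w : ℕ → Bool) (a b : ℕ) : ℕ :=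
  ((Finset.Ico a b).filter (fun i => w i = true)).card

/-- Extend a binary word of length `n` to an infinite word by `false`s. -/
def ext {n : ℕ} (w : Fin n → Bool) : ℕ → Bool :=
  fun i => if h : i < n then w ⟨i, h⟩ else false

/-- A binary word of length `n` is prefix normal if the number of 1s in any
subword is at most the number of 1s in the prefix of the same length. -/
def IsPrefixNormal (n : ℕ) (w : ℕ → Bool) : Prop :=
  ∀ k j : ℕ, k ≤ n → j + k ≤ n → cnt w j (j + k) ≤ cnt w 0 k

/-- `P(Bin(k, 1/2) > d) = Σ_{i=d+1}^k C(k,i) 2^(-k)`, the probability that a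
binomial random variable with `k` trials and success probability `1/2`
exceeds `d`. -/
noncomputable def binGT (k d : ℕ) : ℝ :=
  ∑ i ∈ Finset.Icc (d + 1) k, (k.choose i : ℝ) / 2 ^ k

open Finset

lemma cnt_eq_card_fin (w : ℕ → Bool) (a k : ℕ) :
    cnt w a (a + k) = (univ.filter (fun t : Fin k => w (a + t.val) = true)).card := by
  classical
  have h1 : cnt w a (a + k) = ((Finset.range k).filter (fun t => w (a + t) = true)).card := by
    unfold cnt
    have : Finset.Ico a (a + k) = (Finset.range k).map
        ⟨fun t => a + t, fun x y h => by simpa using h⟩ := by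
      ext i
      simp only [mem_Ico, Finset.mem_map, Finset.mem_range, Function.Embedding.coeFn_mk,
        mem_range]
      constructor
      · intro hi; exact ⟨i - a, by omega, by change a + (i - a) = i; omega⟩
      · rintro ⟨t, ht, rfl⟩; change a ≤ a + t ∧ a + t < a + k; omega
    rw [this, Finset.filter_map, Finset.card_map]
    rfl
  rw [h1, Finset.card_filter, Finset.card_filter, ← Fin.sum_univ_eq_sum_range]

lemma card_count_eq (k i : ℕ) :
    (univ.filter (fun g : Fin k → Bool =>
      (univ.filter (fun t => g t = true)).card = i)).card = k.choose i := by
  classical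
  have hc : k.choose i = (Finset.powersetCard i (univ : Finset (Fin k))).card := by simp
  rw [hc]
  refine Finset.card_nbij' (fun g => univ.filter (fun t => g t = true))
    (fun s => fun t => decide (t ∈ s)) ?_ ?_ ?_ ?_
  · intro g hg
    simp only [Finset.mem_coe, mem_filter, mem_univ, true_and] at hg
    simp [Finset.mem_powersetCard, hg]
  · intro s hs
    simp only [Finset.mem_coe, Finset.mem_powersetCard] at hs
    simp only [Finset.mem_coe, mem_filter, mem_univ, true_and]
    rw [← hs.2]
    congr 1
    ext t; simp
  · intro g _
    funext t
    simp
  · intro s _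
    ext t; simp

lemma card_count_le (k d : ℕ) :
    (univ.filter (fun g : Fin k → Bool =>
      (univ.filter (fun t => g t = true)).card ≤ d)).card
      = ∑ i ∈ Finset.range (d+1), k.choose i := by
  classical
  rw [Finset.card_eq_sum_card_fiberwise
    (f := fun g : Fin k → Bool => (univ.filter (fun t => g t = true)).card)
    (t := Finset.range (d+1))
    (by intro g hg; simp only [Finset.mem_coe, mem_filter, mem_univ, true_and] at hg
        simp only [Finset.mem_coe, mem_range]; omega)]
  refine Finset.sum_congr rfl fun i hi => ?_
  simp only [mem_range] at hi
  rw [← card_count_eq k i]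
  congr 1
  ext g
  simp only [Finset.mem_filter, mem_univ, true_and]
  constructor
  · rintro ⟨_, h⟩; exact h
  · intro h; exact ⟨by omega, h⟩

lemma sum_choose_split (k d : ℕ) (hdk : d ≤ k) :
    (∑ i ∈ Finset.range (d+1), (k.choose i : ℝ)) + ∑ i ∈ Finset.Icc (d+1) k, (k.choose i : ℝ)
      = 2 ^ k := by
  rw [Finset.range_eq_Ico, ← Finset.Ico_add_one_right_eq_Icc (d+1) k,
    Finset.sum_Ico_consecutive _ (by omega) (by omega)]
  rw [← Finset.range_eq_Ico]
  norm_cast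
  exact Nat.sum_range_choose k


/-- For sufficiently large `n`, integers `k` with `log n ≤ k ≤ √n` and
`0 ≤ d ≤ k`: the number of prefix normal binary words `w` of length `n` with
`|w[1,k]|₁ = d` is at most `2^n (1 - P(Bin(k,1/2) > d))^(⌊√n⌋ - 1)`. -/
theorem prefix_normal_block_bound :
    ∃ N : ℕ, ∀ n : ℕ, N ≤ n → ∀ k d : ℕ,
      Real.log n ≤ (k : ℝ) → (k : ℝ) ≤ Real.sqrt n → d ≤ k →
      (Set.ncard {w : Fin n → Bool |
          IsPrefixNormal n (ext w) ∧ cnt (ext w) 0 k = d} : ℝ) ≤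
        2 ^ n * (1 - binGT k d) ^ (Nat.sqrt n - 1) := by
  classical
  refine ⟨3, ?_⟩
  intro n hn k d hlog hsqrt hdk
  set m := Nat.sqrt n with hm
  -- k ≥ 2
  have hk2 : 2 ≤ k := by
    have h1 : (1:ℝ) < Real.log n := by
      have h3 : Real.log 3 ≤ Real.log n := by
        apply Real.log_le_log (by norm_num)
        exact_mod_cast hn
      have : (1:ℝ) < Real.log 3 := by
        rw [show (1:ℝ) = Real.log (Real.exp 1) by rw [Real.log_exp]]
        apply Real.log_lt_log (Real.exp_pos 1)
        have := Real.exp_one_lt_d9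
        linarith
      linarith
    have h1k : (1:ℝ) < k := lt_of_lt_of_le h1 hlog
    have : 1 < k := by exact_mod_cast h1k
    omega
  have hkpos : 0 < k := by omega
  -- k ≤ m
  have hkm : k ≤ m := by
    rw [hm, Nat.le_sqrt]
    have hR : (k:ℝ) * k ≤ n := by
      calc (k:ℝ) * k ≤ Real.sqrt n * Real.sqrt n :=
            mul_le_mul hsqrt hsqrt (by positivity) (Real.sqrt_nonneg _)
        _ = n := Real.mul_self_sqrt (by positivity)
    exact_mod_cast hR
  have hmk : m * k ≤ n := le_trans (Nat.mul_le_mul_left m hkm) (Nat.sqrt_le n)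
  have hkn : k ≤ n := le_trans hkm (Nat.sqrt_le_self n)
  have hm2 : 2 ≤ m := le_trans hk2 hkm
  set r := n - m * k with hr
  have hmm : (m - 1) * k + k = m * k := by
    calc (m - 1) * k + k = ((m - 1) + 1) * k := by ring
      _ = m * k := by rw [Nat.sub_add_cancel (by omega)]
  -- the finset of words whose blocks 1..m-1 each have at most d ones
  set T : Finset (Fin n → Bool) := univ.filter
    (fun w => ∀ j : ℕ, 1 ≤ j → j < m → cnt (ext w) (j * k) (j * k + k) ≤ d) with hT
  -- step 1 : the set is contained in T
  have hsub : {w : Fin n → Bool | IsPrefixNormal n (ext w) ∧ cnt (ext w) 0 k = d} ⊆ ↑T := by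
    intro w hw
    obtain ⟨hpn, hcnt⟩ := hw
    simp only [hT, Finset.coe_filter, Set.mem_setOf_eq, mem_univ, true_and]
    intro j hj1 hjm
    have hjk : j * k + k ≤ n := by
      have h1 : (j + 1) * k ≤ m * k := Nat.mul_le_mul_right k (by omega)
      have h2 : j * k + k = (j + 1) * k := by ring
      omega
    have := hpn k (j * k) hkn hjk
    rwa [hcnt] at this
  have step1 : ({w : Fin n → Bool |
      IsPrefixNormal n (ext w) ∧ cnt (ext w) 0 k = d} : Set _).ncard ≤ T.card := by
    calc _ ≤ (↑T : Set (Fin n → Bool)).ncard := Set.ncard_le_ncard hsub T.finite_toSet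
      _ = T.card := Set.ncard_coe_finset T
  -- step 2 : injection into the product
  set C : Finset (Fin k → Bool) :=
    univ.filter (fun g => (univ.filter (fun t => g t = true)).card ≤ d) with hC
  set Tar : Finset ((Fin (m - 1) → Fin k → Bool) × ((Fin k → Bool) × (Fin r → Bool))) :=
    (Fintype.piFinset (fun _ => C)) ×ˢ univ with hTar
  have step2 : T.card ≤ Tar.card := by
    apply Finset.card_le_card_of_injOn
      (fun w => (fun j t => ext w (k + j.val * k + t.val),
                 (fun t => ext w t.val, fun t => ext w (m * k + t.val))))
    · intro w hw
      simp only [hT, Finset.mem_coe, mem_filter, mem_univ, true_and] at hw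
      simp only [hTar, Finset.mem_coe, Finset.mem_product, mem_univ, and_true, Fintype.mem_piFinset]
      intro j
      simp only [hC, mem_filter, mem_univ, true_and]
      have hb : cnt (ext w) ((j.val + 1) * k) ((j.val + 1) * k + k) ≤ d :=
        hw (j.val + 1) (by omega) (by omega)
    -- rewrite the starting index
      have hje : (j.val + 1) * k = k + j.val * k := by ring
      rw [hje, cnt_eq_card_fin] at hb
      exact hb
    · intro w1 h1 w2 h2 heq
      simp only [Prod.mk.injEq] at heq
      obtain ⟨e1, e2, e3⟩ := heq
      have hext : ∀ p : ℕ, p < n → ext w1 p = ext w2 p := by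
        intro p hp
        by_cases hp1 : p < k
        · have := congrFun e2 ⟨p, hp1⟩
          simpa using this
        · push_neg at hp1
          by_cases hp2 : p < m * k
          · have hbound : p - k < (m - 1) * k := by omega
            have hj : (p - k) / k < m - 1 := (Nat.div_lt_iff_lt_mul hkpos).2 hbound
            have ht : (p - k) % k < k := Nat.mod_lt _ hkpos
            have he := congrFun (congrFun e1 ⟨(p - k) / k, hj⟩) ⟨(p - k) % k, ht⟩
            simp only at he
            have hdm : (p - k) / k * k + (p - k) % k = p - k := by
              rw [Nat.mul_comm] at *
              exact Nat.div_add_mod (p - k) k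
            have hidx : k + (p - k) / k * k + (p - k) % k = p := by omega
            rwa [hidx] at he
          · push_neg at hp2
            have ht : p - m * k < r := by omega
            have he := congrFun e3 ⟨p - m * k, ht⟩
            simp only at he
            have hidx : m * k + (p - m * k) = p := by omega
            rwa [hidx] at he
      funext i
      have hi := hext i.val i.isLt
      simpa [_root_.ext, i.isLt] using hi
  -- step 3 : cardinality of the target
  set A : ℕ := ∑ i ∈ Finset.range (d + 1), k.choose i with hA
  have step3 : Tar.card = A ^ (m - 1) * (2 ^ k * 2 ^ r) := by
    rw [hTar, Finset.card_product, Fintype.card_piFinset]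
    have hCcard : C.card = A := by rw [hC, card_count_le, hA]
    simp only [hCcard, Finset.prod_const, Finset.card_univ, Fintype.card_fin]
    congr 1
    simp [Fintype.card_prod, Fintype.card_fun]
  -- step 4 : the real bound
  have hbin : 1 - binGT k d = (A : ℝ) / 2 ^ k := by
    have hs := sum_choose_split k d hdk
    unfold binGT
    rw [← Finset.sum_div]
    have h2k : (2:ℝ) ^ k ≠ 0 := by positivity
    rw [hA]
    push_cast
    field_simp
    linarith
  have hneq : n = (m - 1) * k + (k + r) := by
    have h2 : m * k + r = n := by omega
    omega
  have hfin : (A : ℝ) ^ (m - 1) * (2 ^ k * 2 ^ r) = 2 ^ n * ((A : ℝ) / 2 ^ k) ^ (m - 1) := by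
    have h2k : (2:ℝ) ^ k ≠ 0 := by positivity
    rw [div_pow]
    rw [show (2:ℝ) ^ n = 2 ^ ((m - 1) * k) * 2 ^ (k + r) by rw [← pow_add, ← hneq]]
    rw [show (2:ℝ) ^ ((m - 1) * k) = (2 ^ k) ^ (m - 1) by rw [← pow_mul, Nat.mul_comm]]
    rw [pow_add]
    field_simp
  -- combine
  calc (Set.ncard {w : Fin n → Bool |
          IsPrefixNormal n (ext w) ∧ cnt (ext w) 0 k = d} : ℝ)
      ≤ (T.card : ℝ) := by exact_mod_cast step1
    _ ≤ (Tar.card : ℝ) := by exact_mod_cast step2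
    _ = (A : ℝ) ^ (m - 1) * (2 ^ k * 2 ^ r) := by rw [step3]; push_cast; ring
    _ = 2 ^ n * ((A : ℝ) / 2 ^ k) ^ (m - 1) := hfin
    _ = 2 ^ n * (1 - binGT k d) ^ (m - 1) := by rw [hbin]
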